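/- Let M be an additive commutative monoid, let r ≥ 1, and let a, t_1,…,t_r ∈ M. Then, as multisets of lists with entries in M, qs [a] [t_1,…,t_r] = ∑_{j=1}^{r+1} {[t_1,…,t_{j-1}, a, t_j,…,t_r]} + ∑_{j=1}^{r} {[t_1,…,t_{j-1}, a + t_j, t_{j+1},…,t_r]}. -/

import Mathlib

open scoped BigOperators

/-- The quasi-shuffle (harmonic) product of two words. -/
def qs {M : Type*} [AddCommMonoid M] : List M → List M → Multiset (List M)
  | [], w => {w}
  | a :: u, [] => {a :: u}
  | a :: u, b :: v =>
      (qs u (b :: v)).map (a :: ·) + (qs (a :: u) v).map (b :: ·) +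
        (qs u v).map (fun w => (a + b) :: w)
termination_by u v => u.length + v.length
decreasing_by all_goals (simp; try omega)

lemma qs_map_sum {M : Type*} (f : List M → List M) {ι : Type*} (s : Finset ι)
    (g : ι → Multiset (List M)) :
    (∑ j ∈ s, g j).map f = ∑ j ∈ s, (g j).map f :=
  map_sum (Multiset.mapAddMonoidHom f) g s

lemma qs_single_aux {M : Type*} [AddCommMonoid M] (a : M) : ∀ w : List M,
    qs [a] w = (∑ j ∈ Finset.range (w.length + 1), ({w.insertIdx j a} : Multiset (List M))) +
      ∑ j ∈ Finset.range w.length, ({w.modify j (a + ·)} : Multiset (List M))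
  | [] => by simp [qs]
  | b :: v => by
    rw [qs, qs_single_aux a v]
    simp only [qs, Multiset.map_singleton, Multiset.map_add, qs_map_sum,
      List.length_cons, Finset.sum_range_succ', List.insertIdx_succ_cons,
      List.modify_succ_cons, List.insertIdx_zero, List.modify_zero_cons]
    abel

lemma ofFn_modify {M : Type*} [AddCommMonoid M] {r : ℕ} (a : M) (t : Fin r → M) (j : Fin r) :
    (List.ofFn t).modify j (a + ·) = List.ofFn fun k : Fin r => if k = j then a + t k else t k := by
  apply List.ext_getElem
  · simp
  · intro m h1 h2
    simp only [List.getElem_modify, List.getElem_ofFn]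
    have : (⟨m, by simpa using h2⟩ : Fin r) = j ↔ (j : ℕ) = m := by
      simp [Fin.ext_iff, eq_comm]
    split_ifs with h h' h' <;> simp_all

theorem qs_singleton {M : Type*} [AddCommMonoid M] (r : ℕ) (hr : 1 ≤ r)
    (a : M) (t : Fin r → M) :
    qs [a] (List.ofFn t) =
      (∑ j : Fin (r + 1), ({(List.ofFn t).insertIdx j a} : Multiset (List M))) +
        ∑ j : Fin r,
          ({List.ofFn fun k : Fin r => if k = j then a + t k else t k} : Multiset (List M)) := by
  rw [qs_single_aux]
  congr 1
  · rw [Fin.sum_univ_eq_sum_range (fun j => ({(List.ofFn t).insertIdx j a} : Multiset (List M)))]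
    simp
  · have h := Fin.sum_univ_eq_sum_range
      (fun j => ({(List.ofFn t).modify j (a + ·)} : Multiset (List M))) r
    rw [List.length_ofFn, ← h]
    exact Finset.sum_congr rfl fun j _ => by rw [ofFn_modify]
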